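/- Define the step operator S(x) = 4[e_2,[e_0,x]] + 2[e_2,x] - 3[e_1,[e_1,x]] on U(W_{≥-1}). Then for every n ≥ 0, S(Ω^{2n}_{2n-1,-1}) = ((2n)^2 - 9(2n) + 12) Ω^{2n+2}_{2n+1,-1}, and this scalar is nonzero in characteristic zero. -/

import Mathlib

noncomputable section

/-- Index set `{i : ℤ | i ≥ -1}` of the basis `e_i` of the one-sided Witt algebra. -/
abbrev WIdx : Type := {i : ℤ // -1 ≤ i}

/-- The defining relations `e_i e_j = e_j e_i + (j - i) e_{i+j}` of the universal
enveloping algebra of the one-sided Witt algebra `W_{≥ -1}`. -/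
inductive wittRel (k : Type) [Field k] :
    FreeAlgebra k WIdx → FreeAlgebra k WIdx → Prop
  | rel (i j : WIdx) (h : -1 ≤ i.1 + j.1) :
      wittRel k (FreeAlgebra.ι k i * FreeAlgebra.ι k j)
        (FreeAlgebra.ι k j * FreeAlgebra.ι k i +
          (j.1 - i.1) • FreeAlgebra.ι k (⟨i.1 + j.1, h⟩ : WIdx))

/-- The universal enveloping algebra `U(W_{≥ -1})`, presented by generators `e_i` (`i ≥ -1`)
and the relations `[e_i, e_j] = (j - i) e_{i+j}`. -/
abbrev UW (k : Type) [Field k] := RingQuot (wittRel k)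

/-- The generator `e_i` of `U(W_{≥ -1})` (junk value `0` for `i < -1`). -/
def eW (k : Type) [Field k] (i : ℤ) : UW k :=
  if h : -1 ≤ i then RingQuot.mkAlgHom k (wittRel k) (FreeAlgebra.ι k ⟨i, h⟩) else 0

/-- The differentiators: `Ω^0_{k,s} = e_k e_s`, `Ω^{m+1}_{k,s} = Ω^m_{k,s} - Ω^m_{k-1,s+1}`. -/
def Ω (k : Type) [Field k] : ℕ → ℤ → ℤ → UW k
  | 0, a, s => eW k a * eW k s
  | m + 1, a, s => Ω k m a s - Ω k m (a - 1) (s + 1)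

/-- The step operator `S(x) = 4[e_2,[e_0,x]] + 2[e_2,x] - 3[e_1,[e_1,x]]` on `U(W_{≥-1})`. -/
def stepS (k : Type) [Field k] (x : UW k) : UW k :=
  (4 : ℤ) • (eW k 2 * (eW k 0 * x - x * eW k 0) - (eW k 0 * x - x * eW k 0) * eW k 2)
    + (2 : ℤ) • (eW k 2 * x - x * eW k 2)
    - (3 : ℤ) • (eW k 1 * (eW k 1 * x - x * eW k 1) - (eW k 1 * x - x * eW k 1) * eW k 1)


lemma eW_comm (k : Type) [Field k] (i j : ℤ) (hi : -1 ≤ i) (hj : -1 ≤ j) (hij : -1 ≤ i + j) :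
    eW k i * eW k j = eW k j * eW k i + (j - i) • eW k (i + j) := by
  rw [eW, eW, eW, dif_pos hi, dif_pos hj, dif_pos hij]
  have h := RingQuot.mkAlgHom_rel k (wittRel.rel (k := k) ⟨i, hi⟩ ⟨j, hj⟩ hij)
  simpa only [map_mul, map_add, map_zsmul] using h

/-- The adjoint operator `ad_p(x) = e_p x - x e_p`. -/
def adW (k : Type) [Field k] (p : ℤ) (x : UW k) : UW k := eW k p * x - x * eW k p

variable {k : Type} [Field k]

lemma adW_sub (p : ℤ) (x y : UW k) : adW k p (x - y) = adW k p x - adW k p y := by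
  simp only [adW, mul_sub, sub_mul]; abel

lemma adW_zsmul (p z : ℤ) (x : UW k) : adW k p (z • x) = z • adW k p x := by
  simp only [adW, mul_smul_comm, smul_mul_assoc, smul_sub]
  exact (smul_sub z _ _).symm

lemma adW_mul (p : ℤ) (x y : UW k) :
    adW k p (x * y) = adW k p x * y + x * adW k p y := by
  simp only [adW, mul_sub, sub_mul, mul_assoc]; abel

lemma adW_eW (p a : ℤ) (hp : -1 ≤ p) (ha : -1 ≤ a) (hpa : -1 ≤ p + a) :
    adW k p (eW k a) = (a - p) • eW k (a + p) := by
  rw [adW, eW_comm k p a hp ha hpa, add_comm p a]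
  abel

lemma adW_E (p a s : ℤ) (hp : 0 ≤ p) (ha : -1 ≤ a) (hs : -1 ≤ s) :
    adW k p (eW k a * eW k s)
      = (a - p) • (eW k (a + p) * eW k s) + (s - p) • (eW k a * eW k (s + p)) := by
  rw [adW_mul, adW_eW p a (by omega) ha (by omega), adW_eW p s (by omega) hs (by omega),
    smul_mul_assoc, mul_smul_comm]

lemma Ω_zero (a s : ℤ) : Ω k 0 a s = eW k a * eW k s := rfl

lemma Ω_succ (m : ℕ) (a s : ℤ) :
    Ω k (m + 1) a s = Ω k m a s - Ω k m (a - 1) (s + 1) := rfl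

lemma adW_omega0 : ∀ (m : ℕ) (a s : ℤ), -1 ≤ s → -1 ≤ a - m →
    adW k 0 (Ω k m a s) = (a + s) • Ω k m a s := by
  intro m
  induction m with
  | zero =>
    intro a s hs ha
    rw [Ω_zero, adW_E 0 a s le_rfl (by omega) hs]
    ring_nf
    module
  | succ m ih =>
    intro a s hs ha
    rw [Ω_succ, adW_sub, ih a s hs (by omega), ih (a - 1) (s + 1) (by omega) (by omega)]
    module

lemma adW_omega1 : ∀ (m : ℕ) (a s : ℤ), -1 ≤ s → -1 ≤ a - m →
    adW k 1 (Ω k m a s)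
      = (a + s + (m : ℤ) - 2) • Ω k m (a + 1) s
        - (s + (m : ℤ) - 1) • Ω k (m + 1) (a + 1) s := by
  intro m
  induction m with
  | zero =>
    intro a s hs ha
    rw [Ω_zero, adW_E 1 a s (by omega) (by omega) hs]
    simp only [Ω_succ, Ω_zero]
    push_cast
    ring_nf
    module
  | succ m ih =>
    intro a s hs ha
    rw [Ω_succ, adW_sub, ih a s hs (by omega), ih (a - 1) (s + 1) (by omega) (by omega)]
    simp only [Ω_succ]
    push_cast
    ring_nf
    module

lemma adW_omega2 : ∀ (m : ℕ) (a s : ℤ), -1 ≤ s → -1 ≤ a - m →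
    adW k 2 (Ω k m a s)
      = (a + s + 2 * (m : ℤ) - 4) • Ω k m (a + 2) s
        + (s + (m : ℤ) - 2) • Ω k (m + 1 + 1) (a + 2) s
        - (2 * s + 3 * (m : ℤ) - 4) • Ω k (m + 1) (a + 2) s := by
  intro m
  induction m with
  | zero =>
    intro a s hs ha
    rw [Ω_zero, adW_E 2 a s (by omega) (by omega) hs]
    simp only [Ω_succ, Ω_zero]
    push_cast
    ring_nf
    module
  | succ m ih =>
    intro a s hs ha
    rw [Ω_succ, adW_sub, ih a s hs (by omega), ih (a - 1) (s + 1) (by omega) (by omega)]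
    simp only [Ω_succ]
    push_cast
    ring_nf
    module

lemma stepS_eq (x : UW k) :
    stepS k x = (4 : ℤ) • adW k 2 (adW k 0 x) + (2 : ℤ) • adW k 2 x
      - (3 : ℤ) • adW k 1 (adW k 1 x) := rfl


/-- For every `n ≥ 0`, `S(Ω^{2n}_{2n-1,-1}) = ((2n)² - 9(2n) + 12) Ω^{2n+2}_{2n+1,-1}`,
and this scalar is nonzero in characteristic zero. -/
theorem stepS_omega (k : Type) [Field k] [CharZero k] (n : ℕ) :
    stepS k (Ω k (2 * n) (2 * n - 1) (-1))
        = ((2 * n : ℤ) ^ 2 - 9 * (2 * n : ℤ) + 12) • Ω k (2 * n + 2) (2 * n + 1) (-1) ∧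
      ((2 * n : ℤ) ^ 2 - 9 * (2 * n : ℤ) + 12) ≠ 0 := by
  constructor
  · have h0 := adW_omega0 (k := k) (2 * n) (2 * n - 1) (-1) le_rfl (by omega)
    have h1 := adW_omega1 (k := k) (2 * n) (2 * n - 1) (-1) le_rfl (by omega)
    have h2 := adW_omega2 (k := k) (2 * n) (2 * n - 1) (-1) le_rfl (by omega)
    have h1a := adW_omega1 (k := k) (2 * n) (2 * n - 1 + 1) (-1) le_rfl (by omega)
    have h1b := adW_omega1 (k := k) (2 * n + 1) (2 * n - 1 + 1) (-1) le_rfl (by omega)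
    rw [stepS_eq, h0, adW_zsmul, h2, h1, adW_sub, adW_zsmul, adW_zsmul, h1a, h1b,
      show (2 * n + 2 : ℕ) = 2 * n + 1 + 1 from rfl]
    push_cast
    ring_nf
    module
  · intro h
    have key : ∀ x : ZMod 9, (2 * x) ^ 2 - 9 * (2 * x) + 12 ≠ 0 := by decide
    have h9 := congrArg (fun z : ℤ => (z : ZMod 9)) h
    push_cast at h9
    exact key (n : ZMod 9) h9
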